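/- Let f : H → ℝ ∪ {+∞} be proper lower semicontinuous, let x* ∈ dom ∂f, and suppose f has the KL property at x* with desingularizing function φ on Γ_η(x*, δ). Let (xᵏ) satisfy H₁: f(x^{k+1}) + aₖ‖x^{k+1} − xᵏ‖² ≤ f(xᵏ) and H₂ (with εₖ = 0): b_{k+1}‖∂f(x^{k+1})‖₋ ≤ ‖x^{k+1} − xᵏ‖, with M := sup_k 1/(aₖ bₖ) < ∞. If xᵏ and x^{k+1} both lie in Γ_η(x*, δ) with f(xᵏ) > f(x*) and f(x^{k+1}) > f(x*), then 2‖x^{k+1} − xᵏ‖ ≤ ‖xᵏ − x^{k−1}‖ + M[φ(f(xᵏ) − f(x*)) − φ(f(x^{k+1}) − f(x*))]. -/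

import Mathlib

open Filter Topology

variable {H : Type*} [NormedAddCommGroup H] [InnerProductSpace ℝ H] [CompleteSpace H]

/-- Fréchet subdifferential of an extended-real-valued function. -/
def frechetSubdiff (f : H → EReal) (x : H) : Set H :=
  {p | f x ≠ ⊤ ∧ ∀ ε : ℝ, 0 < ε → ∀ᶠ y in 𝓝 x,
      f x + (((inner ℝ p (y - x) : ℝ) - ε * ‖y - x‖ : ℝ) : EReal) ≤ f y}

/-- Limiting Fréchet subdifferential. -/
def limSubdiff (f : H → EReal) (x : H) : Set H :=
  {p | ∃ xs ps : ℕ → H,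
      Tendsto xs atTop (𝓝 x) ∧
      Tendsto (fun k => f (xs k)) atTop (𝓝 (f x)) ∧
      (∀ v : H, Tendsto (fun k => (inner ℝ (ps k) v : ℝ)) atTop (𝓝 (inner ℝ p v))) ∧
      ∀ k, ps k ∈ frechetSubdiff f (xs k)}

/-- Lazy slope `inf {‖p‖ : p ∈ ∂f(x)}`, equal to `+∞` when `∂f(x) = ∅`. -/
noncomputable def lazySlope (f : H → EReal) (x : H) : ENNReal :=
  ⨅ p ∈ limSubdiff f x, (‖p‖₊ : ENNReal)

theorem stmt_9 (f : H → EReal) (xstar : H) (η δ M : ℝ) (φ φ' : ℝ → ℝ)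
    (hproper : ∃ z, f z ≠ ⊤) (hnobot : ∀ z, f z ≠ ⊥) (hlsc : LowerSemicontinuous f)
    (hfstar : f xstar ≠ ⊤)
    (hη : 0 < η) (hδ : 0 < δ)
    (hφ0 : φ 0 = 0) (hconc : ConcaveOn ℝ (Set.Ico 0 η) φ)
    (hφcont : ContinuousOn φ (Set.Ico 0 η))
    (hderiv : ∀ t ∈ Set.Ioo 0 η, HasDerivAt φ (φ' t) t)
    (hφ'pos : ∀ t ∈ Set.Ioo 0 η, 0 < φ' t)
    (hKL : ∀ z : H, ‖z - xstar‖ < δ → f xstar < f z → f z < f xstar + (η : EReal) →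
      1 ≤ ENNReal.ofReal (φ' ((f z - f xstar).toReal)) * lazySlope f z)
    (x : ℕ → H) (a b : ℕ → ℝ)
    (ha : ∀ k, 0 < a k) (hb : ∀ k, 0 < b k)
    (hM : ∀ k, 1 / (a k * b k) ≤ M)
    (hH1 : ∀ k, f (x (k + 1)) + ((a k * ‖x (k + 1) - x k‖ ^ 2 : ℝ) : EReal) ≤ f (x k))
    (hH2 : ∀ k, ENNReal.ofReal (b (k + 1)) * lazySlope f (x (k + 1))
        ≤ ENNReal.ofReal ‖x (k + 1) - x k‖)
    (k : ℕ) (hk : 1 ≤ k)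
    (hin : ∀ j ∈ ({k, k + 1} : Set ℕ),
      ‖x j - xstar‖ < δ ∧ f xstar < f (x j) ∧ f (x j) < f xstar + (η : EReal)) :
    2 * ‖x (k + 1) - x k‖ ≤ ‖x k - x (k - 1)‖ +
      M * (φ ((f (x k) - f xstar).toReal) - φ ((f (x (k + 1)) - f xstar).toReal)) := by
  obtain ⟨hdk, hAl, hAu⟩ := hin k (by simp)
  obtain ⟨hdk1, hBl, hBu⟩ := hin (k+1) (by simp)
  have hStop : f xstar ≠ ⊤ := hfstar
  have hAtop : f (x k) ≠ ⊤ := by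
    intro h; rw [h] at hAu; exact not_top_lt (hAu.trans_le le_top)
  have hBtop : f (x (k+1)) ≠ ⊤ := by
    intro h; rw [h] at hBu; exact not_top_lt (hBu.trans_le le_top)
  -- real values
  obtain ⟨rS, hS⟩ : ∃ r : ℝ, f xstar = (r : EReal) :=
    ⟨(f xstar).toReal, (EReal.coe_toReal hStop (hnobot _)).symm⟩
  obtain ⟨rA, hA⟩ : ∃ r : ℝ, f (x k) = (r : EReal) :=
    ⟨(f (x k)).toReal, (EReal.coe_toReal hAtop (hnobot _)).symm⟩
  obtain ⟨rB, hB⟩ : ∃ r : ℝ, f (x (k+1)) = (r : EReal) :=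
    ⟨(f (x (k+1))).toReal, (EReal.coe_toReal hBtop (hnobot _)).symm⟩
  set d : H := x (k+1) - x k with hdd
  set e : H := x k - x (k-1) with hee
  have hΔ1 : (f (x k) - f xstar).toReal = rA - rS := by
    rw [hA, hS, ← EReal.coe_sub, EReal.toReal_coe]
  have hΔ2 : (f (x (k+1)) - f xstar).toReal = rB - rS := by
    rw [hB, hS, ← EReal.coe_sub, EReal.toReal_coe]
  have hSA : rS < rA := by rw [hA, hS] at hAl; exact_mod_cast hAl
  have hSB : rS < rB := by rw [hB, hS] at hBl; exact_mod_cast hBl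
  have hAη : rA < rS + η := by
    rw [hA, hS] at hAu
    have : ((rA : ℝ) : EReal) < ((rS + η : ℝ) : EReal) := by
      rw [EReal.coe_add]; exact hAu
    exact_mod_cast this
  have hΔ1mem : rA - rS ∈ Set.Ioo (0:ℝ) η := ⟨by linarith, by linarith⟩
  -- H1 in real form
  have hH1k : rB + a k * ‖d‖^2 ≤ rA := by
    have := hH1 k
    rw [hA, hB, ← hdd] at this
    have h2 : ((rB + a k * ‖d‖^2 : ℝ) : EReal) ≤ ((rA : ℝ) : EReal) := by
      rw [EReal.coe_add]; exact this
    exact_mod_cast h2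
  have hBA : rB ≤ rA := by nlinarith [ha k, sq_nonneg ‖d‖]
  have hΔ2mem : rB - rS ∈ Set.Ico (0:ℝ) η := ⟨by linarith, by linarith⟩
  set φ'1 : ℝ := φ' (rA - rS) with hφ'1
  have hφ'p : 0 < φ'1 := hφ'pos _ hΔ1mem
  -- KL + H2 gives b k ≤ φ'1 * ‖e‖
  obtain ⟨m, rfl⟩ : ∃ m, k = m + 1 := ⟨k - 1, (Nat.succ_pred_eq_of_pos hk).symm⟩
  have hem : e = x (m+1) - x m := by rw [hee]; congr 1
  have hKLk := hKL (x (m+1)) hdk hAl hAu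
  rw [hΔ1, ← hφ'1] at hKLk
  have hH2m := hH2 m
  rw [← hem] at hH2m
  have hkey : ENNReal.ofReal (b (m+1)) ≤ ENNReal.ofReal (φ'1 * ‖e‖) := by
    calc ENNReal.ofReal (b (m+1)) = ENNReal.ofReal (b (m+1)) * 1 := (mul_one _).symm
      _ ≤ ENNReal.ofReal (b (m+1)) * (ENNReal.ofReal φ'1 * lazySlope f (x (m+1))) :=
          mul_le_mul_right hKLk _
      _ = ENNReal.ofReal φ'1 * (ENNReal.ofReal (b (m+1)) * lazySlope f (x (m+1))) := by ring
      _ ≤ ENNReal.ofReal φ'1 * ENNReal.ofReal ‖e‖ := mul_le_mul_right hH2m _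
      _ = ENNReal.ofReal (φ'1 * ‖e‖) := (ENNReal.ofReal_mul hφ'p.le).symm
  have hbe : b (m+1) ≤ φ'1 * ‖e‖ := by
    rw [ENNReal.ofReal_le_ofReal_iff (by positivity)] at hkey
    exact hkey
  have hepos : 0 < ‖e‖ := by
    by_contra h
    push_neg at h
    have : ‖e‖ = 0 := le_antisymm h (norm_nonneg _)
    rw [this, mul_zero] at hbe
    exact absurd hbe (not_le.mpr (hb (m+1)))
  -- concavity
  have hconcav : φ'1 * ((rA - rS) - (rB - rS)) ≤ φ (rA - rS) - φ (rB - rS) := by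
    rcases eq_or_lt_of_le hBA with heq | hlt
    · rw [heq]; simp
    · have hder : HasDerivAt (-φ) (-φ'1) (rA - rS) := (hderiv _ hΔ1mem).neg
      have := hconc.neg.slope_le_of_hasDerivAt hΔ2mem (Set.mem_Ico_of_Ioo hΔ1mem)
        (by linarith) hder
      rw [slope_def_field] at this
      simp only [Pi.neg_apply] at this
      rw [div_le_iff₀ (by linarith)] at this
      nlinarith
  -- M bound
  have hMk : 1 ≤ M * (a (m+1) * b (m+1)) := by
    have h1 := hM (m+1)
    have hab : 0 < a (m+1) * b (m+1) := mul_pos (ha _) (hb _)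
    rw [div_le_iff₀ hab] at h1
    linarith
  rw [hΔ1, hΔ2]
  -- final arithmetic
  have hadnn : (0:ℝ) ≤ a (m+1) * ‖d‖^2 := mul_nonneg (ha _).le (sq_nonneg _)
  have e1 : φ'1 * (a (m+1) * ‖d‖^2) ≤ φ (rA - rS) - φ (rB - rS) := by
    refine le_trans ?_ hconcav
    exact mul_le_mul_of_nonneg_left (by linarith) hφ'p.le
  have hφnn : 0 ≤ φ (rA - rS) - φ (rB - rS) := by
    have := mul_nonneg hφ'p.le hadnn
    linarith
  have e2 : a (m+1) * ‖d‖^2 * b (m+1) ≤ (φ (rA - rS) - φ (rB - rS)) * ‖e‖ :=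
    calc a (m+1) * ‖d‖^2 * b (m+1)
        ≤ a (m+1) * ‖d‖^2 * (φ'1 * ‖e‖) := mul_le_mul_of_nonneg_left hbe hadnn
      _ = φ'1 * (a (m+1) * ‖d‖^2) * ‖e‖ := by ring
      _ ≤ (φ (rA - rS) - φ (rB - rS)) * ‖e‖ := mul_le_mul_of_nonneg_right e1 (norm_nonneg _)
  have hMpos : 0 < M := by nlinarith [mul_pos (ha (m+1)) (hb (m+1))]
  have e3 : ‖d‖^2 ≤ M * (φ (rA - rS) - φ (rB - rS)) * ‖e‖ :=
    calc ‖d‖^2 = ‖d‖^2 * 1 := (mul_one _).symm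
      _ ≤ ‖d‖^2 * (M * (a (m+1) * b (m+1))) := mul_le_mul_of_nonneg_left hMk (sq_nonneg _)
      _ = M * (a (m+1) * ‖d‖^2 * b (m+1)) := by ring
      _ ≤ M * ((φ (rA - rS) - φ (rB - rS)) * ‖e‖) := mul_le_mul_of_nonneg_left e2 hMpos.le
      _ = M * (φ (rA - rS) - φ (rB - rS)) * ‖e‖ := by ring
  have e4 : (2*‖d‖ - ‖e‖) * ‖e‖ ≤ ‖d‖^2 := by nlinarith [sq_nonneg (‖d‖ - ‖e‖)]
  have e5 : (2*‖d‖ - ‖e‖) * ‖e‖ ≤ (M * (φ (rA - rS) - φ (rB - rS))) * ‖e‖ := e4.trans e3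
  have := le_of_mul_le_mul_right e5 hepos
  linarith
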